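/- Under the uniform-approximation event |Q(B(x,r)) − P(B(x,r))| ≤ ε for all balls, and the margin condition δ_{P,m+u}(y) − δ_{P,m−u}(y) ≤ κu for all y ∈ ℝ^d and 0 ≤ u ≤ u₀, with ε ≤ min(u₀, m, 1−m), one has sup_y |δ_{Q,m}(y) − δ_{P,m}(y)| ≤ κε. -/

import Mathlib

open MeasureTheory
open scoped ENNReal

/-- Distance-to-measure functional: `δ_{μ,m}(x) = inf{r > 0 : μ(B̄(x,r)) > m}`. -/
noncomputable def deltaDTM {d : ℕ} (μ : Measure (EuclideanSpace ℝ (Fin d))) (m : ℝ)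
    (x : EuclideanSpace ℝ (Fin d)) : ℝ≥0∞ :=
  ⨅ (r : ℝ) (_ : 0 < r ∧ m < (μ (Metric.closedBall x r)).toReal), ENNReal.ofReal r

/-- Under uniform approximation of `P` by `Q` over balls and the margin condition
`δ_{P,m+u}(y) − δ_{P,m−u}(y) ≤ κu` for `0 ≤ u ≤ u₀`, with `ε ≤ min(u₀, m, 1−m)`, one has
`sup_y |δ_{Q,m}(y) − δ_{P,m}(y)| ≤ κε`. -/
lemma dtm_le_dtm {d : ℕ} {μ ν : Measure (EuclideanSpace ℝ (Fin d))} {m m' : ℝ}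
    {x : EuclideanSpace ℝ (Fin d)}
    (h : ∀ r : ℝ, m' < (ν (Metric.closedBall x r)).toReal →
      m < (μ (Metric.closedBall x r)).toReal) :
    deltaDTM μ m x ≤ deltaDTM ν m' x := by
  refine le_iInf fun r => le_iInf fun hr => ?_
  exact iInf₂_le r ⟨hr.1, h r hr.2⟩

theorem stmt5 (d : ℕ) (P Q : Measure (EuclideanSpace ℝ (Fin d)))
    [IsProbabilityMeasure P] [IsProbabilityMeasure Q]
    (m u₀ κ ε : ℝ) (hm0 : 0 < m) (hm1 : m < 1) (hu0 : 0 < u₀) (hu0m : u₀ ≤ m) (hκ : 0 < κ)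
    (hmargin : ∀ (y : EuclideanSpace ℝ (Fin d)) (u : ℝ), 0 ≤ u → u ≤ u₀ →
      deltaDTM P (m + u) y ≤ deltaDTM P (m - u) y + ENNReal.ofReal (κ * u))
    (hε0 : 0 ≤ ε) (hε : ε ≤ min u₀ (min m (1 - m)))
    (happrox : ∀ (x : EuclideanSpace ℝ (Fin d)) (r : ℝ),
      |(Q (Metric.closedBall x r)).toReal - (P (Metric.closedBall x r)).toReal| ≤ ε) :
    ∀ y : EuclideanSpace ℝ (Fin d),
      deltaDTM Q m y ≤ deltaDTM P m y + ENNReal.ofReal (κ * ε) ∧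
      deltaDTM P m y ≤ deltaDTM Q m y + ENNReal.ofReal (κ * ε) := by
  intro y
  have hεu₀ : ε ≤ u₀ := le_trans hε (min_le_left _ _)
  -- δ_Q(m) ≤ δ_P(m+ε)
  have h1 : deltaDTM Q m y ≤ deltaDTM P (m + ε) y := by
    refine dtm_le_dtm fun r hr => ?_
    have := abs_le.mp (happrox y r)
    linarith [this.1]
  -- δ_P(m-ε) ≤ δ_Q(m)
  have h2 : deltaDTM P (m - ε) y ≤ deltaDTM Q m y := by
    refine dtm_le_dtm fun r hr => ?_
    have := abs_le.mp (happrox y r)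
    linarith [this.2]
  -- monotonicity in m
  have hmono1 : deltaDTM P (m - ε) y ≤ deltaDTM P m y :=
    dtm_le_dtm fun r hr => by linarith
  have hmono2 : deltaDTM P m y ≤ deltaDTM P (m + ε) y :=
    dtm_le_dtm fun r hr => by linarith
  have hmar := hmargin y ε hε0 hεu₀
  constructor
  · calc deltaDTM Q m y ≤ deltaDTM P (m + ε) y := h1
      _ ≤ deltaDTM P (m - ε) y + ENNReal.ofReal (κ * ε) := hmar
      _ ≤ deltaDTM P m y + ENNReal.ofReal (κ * ε) := add_le_add_left hmono1 _
  · calc deltaDTM P m y ≤ deltaDTM P (m + ε) y := hmono2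
      _ ≤ deltaDTM P (m - ε) y + ENNReal.ofReal (κ * ε) := hmar
      _ ≤ deltaDTM Q m y + ENNReal.ofReal (κ * ε) := add_le_add_left h2 _
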